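/- arXiv:0904.1395 — 4 statements merged into one kernel-verified Lean document; each statement's English description precedes it below -/
import Mathlib

section
/- Let k be a field of characteristic zero and let n be a positive integer. If A, B, C are elements of GL_n(k) such that C has order p for some prime number p, [A,B] = C, and [A,C] = [B,C] = 1 (i.e. C commutes with both A and B), then p ≤ n. -/
open scoped commutatorElement

set_option maxHeartbeats 1000000 in
set_option synthInstance.maxHeartbeats 200000 in
/-- **Birkhoff's lemma.** Let `k` be a field of characteristic zero and `n` a positive
integer. If `A, B, C ∈ GL_n(k)` are such that `C` has order `p` for a prime `p`,
`[A,B] = C` and `[A,C] = [B,C] = 1`, then `p ≤ n`. -/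
theorem birkhoff_commutator_prime_order_le
    (k : Type*) [Field k] [CharZero k] (n : ℕ) (hn : 0 < n)
    (A B C : GL (Fin n) k) (p : ℕ) (hp : p.Prime) (hC : orderOf C = p)
    (hAB : ⁅A, B⁆ = C) (hAC : ⁅A, C⁆ = 1) (hBC : ⁅B, C⁆ = 1) :
    p ≤ n := by
  classical
  haveI := Fact.mk hp
  let K := AlgebraicClosure k
  haveI : CharZero K := charZero_of_injective_algebraMap (algebraMap k K).injective
  -- ring hom from k-matrices to endomorphisms of K^n
  let φ : Matrix (Fin n) (Fin n) k →+* Module.End K (Fin n → K) :=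
    ((Matrix.toLinAlgEquiv' : Matrix (Fin n) (Fin n) K ≃ₐ[K] _) :
        Matrix (Fin n) (Fin n) K →+* Module.End K (Fin n → K)).comp
      ((algebraMap k K).mapMatrix)
  have hφinj : Function.Injective φ := by
    apply Function.Injective.comp (Matrix.toLinAlgEquiv' (R := K)).injective
    intro M N h
    ext i j
    have := congrFun (congrFun h i) j
    exact (algebraMap k K).injective this
  set ψ : GL (Fin n) k → Module.End K (Fin n → K) :=
    fun X => φ (X : Matrix (Fin n) (Fin n) k) with hψ
  have hψmul : ∀ X Y : GL (Fin n) k, ψ (X * Y) = ψ X * ψ Y := by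
    intro X Y; simp [hψ, Units.val_mul, map_mul]
  have hψone : ψ 1 = 1 := by simp [hψ]
  set a := ψ A
  set b := ψ B
  set c := ψ C
  set a' := ψ A⁻¹
  set b' := ψ B⁻¹
  -- group-level identities pushed to End
  have hABg : A * B = C * (B * A) := by rw [← hAB]; group
  have hab : a * b = c * (b * a) := by
    rw [← hψmul, ← hψmul, ← hψmul, hABg]
  have hACg : Commute A C := commutatorElement_eq_one_iff_commute.mp hAC
  have hBCg : Commute B C := commutatorElement_eq_one_iff_commute.mp hBC
  have hca : c * a = a * c := by rw [← hψmul, ← hψmul, hACg.eq]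
  have hcb : c * b = b * c := by rw [← hψmul, ← hψmul, hBCg.eq]
  have hca' : c * a' = a' * c := by rw [← hψmul, ← hψmul, hACg.inv_left.eq]
  have hcb' : c * b' = b' * c := by rw [← hψmul, ← hψmul, hBCg.inv_left.eq]
  have haa' : a * a' = 1 := by rw [← hψmul, mul_inv_cancel, hψone]
  have hbb' : b * b' = 1 := by rw [← hψmul, mul_inv_cancel, hψone]
  have hcp : c ^ p = 1 := by
    rw [← map_pow]
    have : C ^ p = 1 := hC ▸ pow_orderOf_eq_one C
    show φ ((C ^ p : GL (Fin n) k) : Matrix (Fin n) (Fin n) k) = 1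
    rw [this]; exact hψone
  have hc1 : c ≠ 1 := by
    intro h
    have : C = 1 := by
      have := hφinj (h.trans hψone.symm)
      exact Units.ext this
    rw [this, orderOf_one] at hC
    exact hp.one_lt.ne' hC.symm
  -- find an eigenvalue ζ ≠ 1 of c
  have hcne : c - 1 ≠ 0 := sub_ne_zero.mpr hc1
  set W := LinearMap.range (c - 1) with hWdef
  have hW : ∀ x ∈ W, c x ∈ W := by
    rintro x ⟨u, rfl⟩
    refine ⟨c u, ?_⟩
    show ((c - 1) * c) u = (c * (c - 1)) u
    rw [sub_one_mul, mul_sub_one]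
  obtain ⟨u0, hu0⟩ := DFunLike.ne_iff.mp hcne
  have hu0' : (c - 1) u0 ≠ 0 := by simpa using hu0
  haveI : Nontrivial W := ⟨⟨(c - 1) u0, ⟨u0, rfl⟩⟩, 0,
    fun h => hu0' (by simpa [Subtype.ext_iff] using h)⟩
  obtain ⟨ζ, hζ⟩ := Module.End.exists_eigenvalue (LinearMap.restrict c hW)
  obtain ⟨w0, hw0⟩ := hζ.exists_hasEigenvector
  set w : Fin n → K := (w0 : Fin n → K) with hwdef
  have hwne : w ≠ 0 := by
    simpa [hwdef, Submodule.coe_eq_zero] using hw0.2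
  have hcw : c w = ζ • w := by
    have := Module.End.mem_eigenspace_iff.mp hw0.1
    have h2 := congrArg (Subtype.val) this
    simpa [LinearMap.restrict_coe_apply] using h2
  have hpoww : ∀ i : ℕ, (c ^ i) w = ζ ^ i • w := by
    intro i
    induction i with
    | zero => simp
    | succ i ih =>
      rw [pow_succ, Module.End.mul_apply, hcw, map_smul, ih, smul_smul, ← pow_succ']
  have hζp : ζ ^ p = 1 := by
    have h1 : (c ^ p) w = ζ ^ p • w := hpoww p
    rw [hcp] at h1
    have h2 : ζ ^ p • w = (1 : K) • w := by
      rw [one_smul]; exact h1.symm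
    exact smul_left_injective K hwne h2
  have hζne1 : ζ ≠ 1 := by
    intro hζ1
    have hcww : c w = w := by rw [hcw, hζ1, one_smul]
    obtain ⟨u, hu⟩ := w0.2
    set S : Module.End K (Fin n → K) := ∑ i ∈ Finset.range p, c ^ i with hSdef
    have hS : S * (c - 1) = 0 := by rw [hSdef, geom_sum_mul, hcp, sub_self]
    have h0 : S w = 0 := by
      rw [hwdef, ← hu]
      show (S * (c - 1)) u = 0
      rw [hS]; rfl
    have hciw : ∀ i : ℕ, (c ^ i) w = w := by
      intro i
      induction i with
      | zero => rfl
      | succ i ih => rw [pow_succ, Module.End.mul_apply, hcww, ih]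
    have h1 : S w = (p : K) • w := by
      rw [hSdef, LinearMap.sum_apply]
      simp only [hciw]
      rw [Finset.sum_const, Finset.card_range, Nat.cast_smul_eq_nsmul]
    rw [h0] at h1
    rcases smul_eq_zero.mp h1.symm with h | h
    · exact (Nat.cast_ne_zero.mpr hp.ne_zero) h
    · exact hwne h
  have hordζ : orderOf ζ = p := orderOf_eq_prime hζp hζne1
  -- the eigenspace E
  set E := Module.End.eigenspace c ζ with hEdef
  have hwE : w ∈ E := Module.End.mem_eigenspace_iff.mpr hcw
  have hmem : ∀ f : Module.End K (Fin n → K), c * f = f * c → ∀ x ∈ E, f x ∈ E := by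
    intro f hf x hx
    rw [hEdef, Module.End.mem_eigenspace_iff] at hx ⊢
    calc c (f x) = (c * f) x := rfl
    _ = f (c x) := by rw [hf]; rfl
    _ = ζ • f x := by rw [hx, map_smul]
  have hEa := hmem a hca
  have hEb := hmem b hcb
  have hEa' := hmem a' hca'
  have hEb' := hmem b' hcb'
  set aE := LinearMap.restrict a hEa with haEdef
  set bE := LinearMap.restrict b hEb with hbEdef
  set a'E := LinearMap.restrict a' hEa'
  set b'E := LinearMap.restrict b' hEb'
  have hrmul : ∀ (f g : Module.End K (Fin n → K)) (hf : ∀ x ∈ E, f x ∈ E)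
      (hg : ∀ x ∈ E, g x ∈ E) (hfg : f * g = 1),
      (LinearMap.restrict f hf) * (LinearMap.restrict g hg) = 1 := by
    intro f g hf hg hfg
    refine LinearMap.ext fun x => Subtype.ext ?_
    have : f (g (x : Fin n → K)) = (x : Fin n → K) := by
      rw [← Module.End.mul_apply, hfg]; rfl
    simpa [Module.End.mul_apply, LinearMap.restrict_coe_apply] using this
  have haE1 : aE * a'E = 1 := hrmul a a' hEa hEa' haa'
  have hbE1 : bE * b'E = 1 := hrmul b b' hEb hEb' hbb'
  have hkey : aE * bE = ζ • (bE * aE) := by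
    refine LinearMap.ext fun x => Subtype.ext ?_
    have hx : (x : Fin n → K) ∈ E := x.2
    have h1 : a (b (x : Fin n → K)) = c (b (a (x : Fin n → K))) := by
      have := LinearMap.congr_fun hab (x : Fin n → K)
      simpa [Module.End.mul_apply] using this
    have h2 : b (a (x : Fin n → K)) ∈ E := hEb _ (hEa _ hx)
    have h3 : c (b (a (x : Fin n → K))) = ζ • b (a (x : Fin n → K)) :=
      Module.End.mem_eigenspace_iff.mp h2
    simp only [Module.End.mul_apply, LinearMap.smul_apply, Submodule.coe_smul,
      haEdef, hbEdef, LinearMap.restrict_coe_apply]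
    rw [h1, h3]
  -- take determinants
  set d := Module.finrank K E with hd
  have hdet := congrArg LinearMap.det hkey
  rw [map_mul, LinearMap.det_smul, map_mul] at hdet
  have hadet : LinearMap.det aE ≠ 0 := by
    have := congrArg LinearMap.det haE1
    rw [map_mul, map_one] at this
    exact left_ne_zero_of_mul_eq_one this
  have hbdet : LinearMap.det bE ≠ 0 := by
    have := congrArg LinearMap.det hbE1
    rw [map_mul, map_one] at this
    exact left_ne_zero_of_mul_eq_one this
  have hζd : ζ ^ d = 1 := by
    have hne : LinearMap.det bE * LinearMap.det aE ≠ 0 := mul_ne_zero hbdet hadet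
    have : (1 : K) * (LinearMap.det bE * LinearMap.det aE)
        = ζ ^ d * (LinearMap.det bE * LinearMap.det aE) := by
      rw [one_mul, ← hdet]; ring
    exact (mul_right_cancel₀ hne this).symm
  have hdvd : p ∣ d := hordζ ▸ orderOf_dvd_of_pow_eq_one hζd
  haveI : Nontrivial E := ⟨⟨w, hwE⟩, 0, by simp [Subtype.ext_iff, hwne]⟩
  have hdpos : 0 < d := hd ▸ Module.finrank_pos
  have hdn : d ≤ n := by
    have h1 : d ≤ Module.finrank K (Fin n → K) := Submodule.finrank_le E
    rwa [Module.finrank_fin_fun] at h1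
  exact (Nat.le_of_dvd hdpos hdvd).trans hdn
end

section
/- Let k be a field of characteristic zero and let n be a positive integer. There is no injective group homomorphism from the Cremona group Bir(ℙ²), identified with the group of ℂ-algebra automorphisms of the field ℂ(x,y), into GL_n(k). -/
open MvPolynomial

noncomputable section

/-- The field `ℂ(x,y)` of rational functions in two variables. -/
abbrev K2 : Type := FractionRing (MvPolynomial (Fin 2) ℂ)

/-- The Cremona group, identified with the group of `ℂ`-algebra automorphisms
of `ℂ(x,y)`. -/
abbrev Cremona : Type := K2 ≃ₐ[ℂ] K2

set_option maxHeartbeats 1000000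
set_option synthInstance.maxHeartbeats 400000

abbrev R2 : Type := MvPolynomial (Fin 2) ℂ

namespace CremonaAux


def U : K2 := algebraMap R2 K2 (X 0)
def V : K2 := algebraMap R2 K2 (X 1)

lemma hU : U ≠ 0 := fun h => X_ne_zero 0 ((map_eq_zero_iff _ (IsFractionRing.injective R2 K2)).1 h)
lemma hV : V ≠ 0 := fun h => X_ne_zero 1 ((map_eq_zero_iff _ (IsFractionRing.injective R2 K2)).1 h)

def cc (z : ℂ) : K2 := algebraMap ℂ K2 z

lemma cc_C (z : ℂ) : algebraMap R2 K2 (C z) = cc z := (IsScalarTower.algebraMap_apply ℂ R2 K2 z).symm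

lemma cc_injective : Function.Injective cc := (algebraMap ℂ K2).injective

def gens (s t : ℂˣ) (a b c d : ℤ) : Fin 2 → K2 :=
  ![cc s * U ^ a * V ^ b, cc t * U ^ c * V ^ d]

def F (s t : ℂˣ) (a b c d : ℤ) : R2 →ₐ[ℂ] K2 := aeval (gens s t a b c d)

lemma F_monomial (s t : ℂˣ) (a b c d : ℤ) (α : Fin 2 →₀ ℕ) (v : ℂ) :
    F s t a b c d (monomial α v) =
      cc (v * s ^ (α 0) * t ^ (α 1)) * U ^ (a * α 0 + c * α 1) * V ^ (b * α 0 + d * α 1) := by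
  rw [F, aeval_monomial, Finsupp.prod_fintype _ _ (fun i => pow_zero _), Fin.prod_univ_two]
  simp only [gens, Matrix.cons_val_zero, Matrix.cons_val_one, Matrix.head_cons]
  rw [mul_pow, mul_pow, mul_pow, mul_pow]
  simp only [cc, map_mul, map_pow]
  rw [← zpow_natCast (U ^ a), ← zpow_natCast (V ^ b), ← zpow_natCast (U ^ c), ← zpow_natCast (V ^ d),
    ← zpow_mul, ← zpow_mul, ← zpow_mul, ← zpow_mul, zpow_add₀ hU, zpow_add₀ hV]
  ring

lemma F_ne_zero (s t : ℂˣ) (a b c d : ℤ) (hdet : a * d - b * c ≠ 0)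
    {P : R2} (hP : P ≠ 0) : F s t a b c d P ≠ 0 := by
  classical
  set e1 : (Fin 2 →₀ ℕ) → ℤ := fun α => a * α 0 + c * α 1 with he1
  set e2 : (Fin 2 →₀ ℕ) → ℤ := fun α => b * α 0 + d * α 1 with he2
  set z1 : ℕ := ∑ α ∈ P.support, (e1 α).natAbs with hz1def
  set z2 : ℕ := ∑ α ∈ P.support, (e2 α).natAbs with hz2def
  have hz1 : ∀ α ∈ P.support, 0 ≤ e1 α + z1 := by
    intro α hα
    have h1 : (e1 α).natAbs ≤ z1 :=
      Finset.single_le_sum (f := fun α => (e1 α).natAbs) (fun _ _ => Nat.zero_le _) hα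
    omega
  have hz2 : ∀ α ∈ P.support, 0 ≤ e2 α + z2 := by
    intro α hα
    have h1 : (e2 α).natAbs ≤ z2 :=
      Finset.single_le_sum (f := fun α => (e2 α).natAbs) (fun _ _ => Nat.zero_le _) hα
    omega
  set nExp : (Fin 2 →₀ ℕ) → (Fin 2 →₀ ℕ) := fun α =>
    Finsupp.single 0 (e1 α + z1).toNat + Finsupp.single 1 (e2 α + z2).toNat with hnExp
  have hinj : ∀ α ∈ P.support, ∀ β ∈ P.support, nExp α = nExp β → α = β := by
    intro α hα β hβ h
    have h0 : (e1 α + z1).toNat = (e1 β + z1).toNat := by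
      have := DFunLike.congr_fun h 0
      simpa [hnExp] using this
    have h1 : (e2 α + z2).toNat = (e2 β + z2).toNat := by
      have := DFunLike.congr_fun h 1
      simpa [hnExp] using this
    have e1eq : e1 α = e1 β := by have := hz1 α hα; have := hz1 β hβ; omega
    have e2eq : e2 α = e2 β := by have := hz2 α hα; have := hz2 β hβ; omega
    simp only [he1, he2] at e1eq e2eq
    have hx : (a * d - b * c) * ((α 0 : ℤ) - β 0) = 0 := by linear_combination d * e1eq - c * e2eq
    have hy : (a * d - b * c) * ((α 1 : ℤ) - β 1) = 0 := by linear_combination a * e2eq - b * e1eq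
    have hx0 : (α 0 : ℤ) = β 0 := by
      rcases mul_eq_zero.1 hx with h' | h'
      · exact absurd h' hdet
      · omega
    have hy0 : (α 1 : ℤ) = β 1 := by
      rcases mul_eq_zero.1 hy with h' | h'
      · exact absurd h' hdet
      · omega
    ext i
    fin_cases i
    · exact_mod_cast hx0
    · exact_mod_cast hy0
  set Q : R2 := ∑ α ∈ P.support, monomial (nExp α) (coeff α P * s ^ (α 0) * t ^ (α 1)) with hQdef
  have hQ0 : Q ≠ 0 := by
    obtain ⟨α₀, hα₀⟩ := MvPolynomial.support_nonempty.2 hP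
    have hc : coeff (nExp α₀) Q = coeff α₀ P * s ^ (α₀ 0) * t ^ (α₀ 1) := by
      rw [hQdef, coeff_sum]
      have hside : ∀ β ∈ P.support, β ≠ α₀ →
          coeff (nExp α₀) (monomial (nExp β) (coeff β P * (s:ℂ) ^ (β 0) * (t:ℂ) ^ (β 1))) = 0 := by
        intro β hβ hne
        rw [coeff_monomial, if_neg]
        intro hne'
        exact hne (hinj β hβ α₀ hα₀ hne')
      exact (Finset.sum_eq_single_of_mem α₀ hα₀ hside).trans
        (by rw [coeff_monomial, if_pos rfl])
    intro h
    rw [h, coeff_zero] at hc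
    exact (mul_ne_zero (mul_ne_zero (mem_support_iff.1 hα₀)
      (pow_ne_zero _ s.ne_zero)) (pow_ne_zero _ t.ne_zero)) hc.symm
  have himg : algebraMap R2 K2 Q = U ^ (z1 : ℤ) * V ^ (z2 : ℤ) * F s t a b c d P := by
    conv_rhs => rw [← support_sum_monomial_coeff P]
    rw [hQdef, map_sum, map_sum, Finset.mul_sum]
    apply Finset.sum_congr rfl
    intro α hα
    have hmono : (monomial (nExp α) (coeff α P * s ^ (α 0) * t ^ (α 1)) : R2)
        = C (coeff α P * s ^ (α 0) * t ^ (α 1)) * X 0 ^ (e1 α + z1).toNat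
            * X 1 ^ (e2 α + z2).toNat := by
      have hx0 : (C (coeff α P * (s:ℂ) ^ (α 0) * (t:ℂ) ^ (α 1)) * X 0 ^ (e1 α + z1).toNat : R2)
          = monomial (Finsupp.single 0 (e1 α + z1).toNat) (coeff α P * (s:ℂ) ^ (α 0) * (t:ℂ) ^ (α 1)) := by
        rw [X_pow_eq_monomial, C_mul_monomial, mul_one]
      rw [hnExp, monomial_add_single, ← hx0]
    rw [hmono, map_mul, map_mul, map_pow, map_pow, cc_C, F_monomial]
    show cc _ * U ^ (e1 α + z1).toNat * V ^ (e2 α + z2).toNat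
        = U ^ (z1 : ℤ) * V ^ (z2 : ℤ) * (cc _ * U ^ (e1 α) * V ^ (e2 α))
    rw [← zpow_natCast U ((e1 α + z1).toNat), ← zpow_natCast V ((e2 α + z2).toNat),
      Int.toNat_of_nonneg (hz1 α hα), Int.toNat_of_nonneg (hz2 α hα),
      zpow_add₀ hU, zpow_add₀ hV]
    simp only [cc, map_mul, map_pow]
    ring
  intro h
  rw [h, mul_zero] at himg
  exact hQ0 ((map_eq_zero_iff _ (IsFractionRing.injective R2 K2)).1 himg)

lemma F_injective (s t : ℂˣ) (a b c d : ℤ) (hdet : a * d - b * c ≠ 0) :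
    Function.Injective (F s t a b c d) := by
  have : ∀ P : R2, F s t a b c d P = 0 → P = 0 := by
    intro P h
    by_contra hP
    exact F_ne_zero s t a b c d hdet hP h
  exact (injective_iff_map_eq_zero _).2 this
lemma F_X0 (s t : ℂˣ) (a b c d : ℤ) : F s t a b c d (X 0) = cc s * U ^ a * V ^ b := by
  simp [F, gens]

lemma F_X1 (s t : ℂˣ) (a b c d : ℤ) : F s t a b c d (X 1) = cc t * U ^ c * V ^ d := by
  simp [F, gens]

lemma F_C (s t : ℂˣ) (a b c d : ℤ) (z : ℂ) : F s t a b c d (C z) = cc z := by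
  simp [F, cc, algebraMap_eq]

def monoA (s t : ℂˣ) (a b c d : ℤ) (h : a * d - b * c ≠ 0) : K2 →ₐ[ℂ] K2 :=
  IsFractionRing.liftAlgHom (K := K2) (F_injective s t a b c d h)

lemma monoA_algebraMap (s t : ℂˣ) (a b c d : ℤ) (h : a * d - b * c ≠ 0) (P : R2) :
    monoA s t a b c d h (algebraMap R2 K2 P) = F s t a b c d P := by
  rw [monoA, IsFractionRing.liftAlgHom_apply, IsFractionRing.lift_algebraMap]
  rfl

lemma monoA_U (s t : ℂˣ) (a b c d : ℤ) (h : a * d - b * c ≠ 0) :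
    monoA s t a b c d h U = cc s * U ^ a * V ^ b := by
  conv_lhs => rw [show U = algebraMap R2 K2 (X 0) from rfl]
  rw [monoA_algebraMap, F_X0]

lemma monoA_V (s t : ℂˣ) (a b c d : ℤ) (h : a * d - b * c ≠ 0) :
    monoA s t a b c d h V = cc t * U ^ c * V ^ d := by
  conv_lhs => rw [show V = algebraMap R2 K2 (X 1) from rfl]
  rw [monoA_algebraMap, F_X1]

lemma monoA_cc (s t : ℂˣ) (a b c d : ℤ) (h : a * d - b * c ≠ 0) (z : ℂ) :
    monoA s t a b c d h (cc z) = cc z := AlgHom.commutes _ z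

lemma cc_unit_zpow (s : ℂˣ) (x : ℤ) : cc (s : ℂ) ^ x = cc ((s ^ x : ℂˣ) : ℂ) := by
  rw [Units.val_zpow_eq_zpow_val, cc, cc, map_zpow₀]

lemma gen_pow (s t : ℂˣ) (a b c d : ℤ) (x y : ℤ) :
    (cc s * U ^ a * V ^ b) ^ x * (cc t * U ^ c * V ^ d) ^ y
      = cc ((s ^ x * t ^ y : ℂˣ) : ℂ) * U ^ (a * x + c * y) * V ^ (b * x + d * y) := by
  rw [mul_zpow, mul_zpow, mul_zpow, mul_zpow, ← zpow_mul U a x, ← zpow_mul V b x,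
    ← zpow_mul U c y, ← zpow_mul V d y, zpow_add₀ hU, zpow_add₀ hV,
    cc_unit_zpow s x, cc_unit_zpow t y, Units.val_mul]
  simp only [cc, map_mul]
  ring

lemma monoA_F (s t s' t' s'' t'' : ℂˣ) (a b c d a' b' c' d' a'' b'' c'' d'' : ℤ)
    (h1 : a * d - b * c ≠ 0)
    (hs : s'' = s' * s ^ a' * t ^ b') (ht : t'' = t' * s ^ c' * t ^ d')
    (ha : a'' = a * a' + c * b') (hb : b'' = b * a' + d * b')
    (hc : c'' = a * c' + c * d') (hd : d'' = b * c' + d * d') :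
    (monoA s t a b c d h1).comp (F s' t' a' b' c' d') = F s'' t'' a'' b'' c'' d'' := by
  apply MvPolynomial.algHom_ext
  intro i
  fin_cases i <;> simp only [Fin.zero_eta, Fin.mk_one, Fin.isValue]
  · rw [AlgHom.comp_apply, F_X0, F_X0, map_mul, map_mul, monoA_cc,
      map_zpow₀, map_zpow₀, monoA_U, monoA_V, mul_assoc, gen_pow,
      hs, ha, hb]
    simp only [Units.val_mul, cc, map_mul]
    ring
  · rw [AlgHom.comp_apply, F_X1, F_X1, map_mul, map_mul, monoA_cc,
      map_zpow₀, map_zpow₀, monoA_U, monoA_V, mul_assoc, gen_pow,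
      ht, hc, hd]
    simp only [Units.val_mul, cc, map_mul]
    ring

lemma monoA_monoA (s t s' t' s'' t'' : ℂˣ) (a b c d a' b' c' d' a'' b'' c'' d'' : ℤ)
    (h1 : a * d - b * c ≠ 0) (h2 : a' * d' - b' * c' ≠ 0) (h3 : a'' * d'' - b'' * c'' ≠ 0)
    (hs : s'' = s' * s ^ a' * t ^ b') (ht : t'' = t' * s ^ c' * t ^ d')
    (ha : a'' = a * a' + c * b') (hb : b'' = b * a' + d * b')
    (hc : c'' = a * c' + c * d') (hd : d'' = b * c' + d * d') (x : K2) :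
    monoA s t a b c d h1 (monoA s' t' a' b' c' d' h2 x)
      = monoA s'' t'' a'' b'' c'' d'' h3 x := by
  have key : ((monoA s t a b c d h1).toRingHom.comp (monoA s' t' a' b' c' d' h2).toRingHom)
      = (monoA s'' t'' a'' b'' c'' d'' h3).toRingHom := by
    apply IsLocalization.ringHom_ext (nonZeroDivisors R2)
    apply RingHom.ext
    intro P
    simp only [RingHom.comp_apply, AlgHom.toRingHom_eq_coe, RingHom.coe_coe]
    rw [monoA_algebraMap, monoA_algebraMap,
      ← AlgHom.comp_apply, monoA_F s t s' t' s'' t'' a b c d a' b' c' d' a'' b'' c'' d''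
        h1 hs ht ha hb hc hd]
  exact DFunLike.congr_fun key x

lemma F_id : F 1 1 1 0 0 1 = IsScalarTower.toAlgHom ℂ R2 K2 := by
  apply MvPolynomial.algHom_ext
  intro i
  fin_cases i <;> simp only [Fin.zero_eta, Fin.mk_one, Fin.isValue]
  · rw [F_X0]; simp [cc, U]
  · rw [F_X1]; simp [cc, V]

lemma monoA_id (h : (1 : ℤ) * 1 - 0 * 0 ≠ 0) (x : K2) : monoA 1 1 1 0 0 1 h x = x := by
  have key : (monoA 1 1 1 0 0 1 h).toRingHom = RingHom.id K2 := by
    apply IsLocalization.ringHom_ext (nonZeroDivisors R2)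
    apply RingHom.ext
    intro P
    simp only [RingHom.comp_apply, AlgHom.toRingHom_eq_coe, RingHom.coe_coe, RingHom.id_apply]
    rw [monoA_algebraMap, F_id]
    rfl
  exact DFunLike.congr_fun key x
lemma units_collect (s t : ℂˣ) (x1 y1 x2 y2 : ℤ) :
    (s ^ x1 * t ^ y1) * (s ^ x2 * t ^ y2) = s ^ (x1 + x2) * t ^ (y1 + y2) := by
  rw [mul_mul_mul_comm, ← zpow_add, ← zpow_add]

lemma units_s_mul (s : ℂˣ) (x : ℤ) : s * s ^ x = s ^ (1 + x) := by
  rw [zpow_add, zpow_one]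

lemma units_pow_pow (s t : ℂˣ) (x y k : ℤ) :
    (s ^ x * t ^ y) ^ k = s ^ (x * k) * t ^ (y * k) := by
  rw [mul_zpow, ← zpow_mul, ← zpow_mul]

def monoE (s t : ℂˣ) (a b c d : ℤ) (h : a * d - b * c = 1) : K2 ≃ₐ[ℂ] K2 := by
  have hne : a * d - b * c ≠ 0 := by rw [h]; exact one_ne_zero
  have hne' : d * a - -b * -c ≠ 0 := by
    rw [show d * a - -b * -c = a * d - b * c by ring, h]; exact one_ne_zero
  refine AlgEquiv.ofAlgHom (monoA s t a b c d hne)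
    (monoA (s ^ (-d) * t ^ b) (s ^ c * t ^ (-a)) d (-b) (-c) a hne')
    (AlgHom.ext fun x => ?_) (AlgHom.ext fun x => ?_)
  · -- orig ∘ inv = id
    refine (monoA_monoA s t (s ^ (-d) * t ^ b) (s ^ c * t ^ (-a)) 1 1
      a b c d d (-b) (-c) a 1 0 0 1 hne hne' (by norm_num) ?_ ?_ ?_ ?_ ?_ ?_ x).trans
      (monoA_id (by norm_num) x)
    · symm
      rw [show (s:ℂˣ)^d = s^d * t^(0:ℤ) from by simp,
        show (t:ℂˣ)^(-b) = s^(0:ℤ) * t^(-b) from by simp,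
        units_collect, units_collect,
        show -d + d + 0 = 0 by ring, show b + 0 + -b = 0 by ring]
      simp
    · symm
      rw [show (s:ℂˣ)^(-c) = s^(-c) * t^(0:ℤ) from by simp,
        show (t:ℂˣ)^a = s^(0:ℤ) * t^a from by simp,
        units_collect, units_collect,
        show c + -c + 0 = 0 by ring, show -a + 0 + a = 0 by ring]
      simp
    · linear_combination -h
    · ring
    · ring
    · linear_combination -h
  · -- inv ∘ orig = id
    refine (monoA_monoA (s ^ (-d) * t ^ b) (s ^ c * t ^ (-a)) s t 1 1
      d (-b) (-c) a a b c d 1 0 0 1 hne' hne (by norm_num) ?_ ?_ ?_ ?_ ?_ ?_ x).trans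
      (monoA_id (by norm_num) x)
    · symm
      rw [units_pow_pow, units_pow_pow, mul_assoc s, units_collect, ← mul_assoc,
        units_s_mul, show (1:ℤ) + (-d * a + c * b) = 0 by linear_combination -h,
        show b * a + -a * b = 0 by ring]
      simp
    · symm
      rw [units_pow_pow, units_pow_pow, mul_assoc t, units_collect,
        mul_left_comm t, units_s_mul (s := t),
        show -d * c + c * d = 0 by ring,
        show (1:ℤ) + (b * c + -a * d) = 0 by linear_combination -h]
      simp
    · linear_combination -h
    · ring
    · ring
    · linear_combination -h

lemma monoE_apply (s t : ℂˣ) (a b c d : ℤ) (h : a * d - b * c = 1) (x : K2) :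
    monoE s t a b c d h x = monoA s t a b c d (by rw [h]; exact one_ne_zero) x := rfl

def sigmaE (z : ℂˣ) : K2 ≃ₐ[ℂ] K2 := monoE z 1 1 0 0 1 (by norm_num)

lemma one_det : (1:ℤ) * 1 - 0 * 0 ≠ 0 := by norm_num

lemma sigmaE_pow (z : ℂˣ) (j : ℕ) (x : K2) :
    ((sigmaE z) ^ j : K2 ≃ₐ[ℂ] K2) x = monoA (z ^ j) 1 1 0 0 1 one_det x := by
  induction j generalizing x with
  | zero =>
      rw [pow_zero, pow_zero]
      exact (monoA_id one_det x).symm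
  | succ j ih =>
      rw [pow_succ, AlgEquiv.mul_apply]
      have hx : (sigmaE z) x = monoA z 1 1 0 0 1 one_det x := rfl
      rw [hx, ih, pow_succ]
      refine monoA_monoA (z ^ j) 1 z 1 (z ^ j * z) 1 1 0 0 1 1 0 0 1 1 0 0 1
        one_det one_det one_det ?_ ?_ (by ring) (by ring) (by ring) (by ring) _
      · simp [mul_comm]
      · simp

lemma sigmaE_order (z : ℂˣ) (P : ℕ) (hz : z ^ P = 1) : (sigmaE z) ^ P = 1 := by
  apply DFunLike.ext
  intro x
  rw [sigmaE_pow, hz, AlgEquiv.one_apply]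
  exact monoA_id one_det x

lemma sigmaE_ne_one (z : ℂˣ) (hz1 : (z : ℂ) ≠ 1) : sigmaE z ≠ 1 := by
  intro h
  have h2 := DFunLike.congr_fun h U
  rw [AlgEquiv.one_apply, sigmaE, monoE_apply, monoA_U] at h2
  rw [zpow_one, zpow_zero, mul_one] at h2
  have h3 : cc (z : ℂ) * U = cc 1 * U := by
    rw [show cc (1:ℂ) = 1 from map_one (algebraMap ℂ K2), one_mul, h2]
  exact hz1 (cc_injective (mul_right_cancel₀ hU h3))

lemma conj_rel (z : ℂˣ) (P : ℕ) (hz : z ^ P = 1) (m : ℕ) (B D : ℤ)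
    (hdet : (m : ℤ) * D - B * P = 1) :
    ∃ τ : K2 ≃ₐ[ℂ] K2, τ * (sigmaE z) ^ m * τ⁻¹ = sigmaE z := by
  have hne : (m : ℤ) * D - B * P ≠ 0 := by rw [hdet]; exact one_ne_zero
  refine ⟨monoE 1 1 m B P D hdet, ?_⟩
  have key : monoE 1 1 m B P D hdet * (sigmaE z) ^ m = sigmaE z * monoE 1 1 m B P D hdet := by
    apply DFunLike.ext
    intro x
    have e1 : ∀ y, (monoE 1 1 (m:ℤ) B P D hdet) y = monoA 1 1 m B P D hne y := fun y => rfl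
    have e2 : ∀ y, (sigmaE z) y = monoA z 1 1 0 0 1 one_det y := fun y => rfl
    rw [AlgEquiv.mul_apply, AlgEquiv.mul_apply, sigmaE_pow, e1, e1, e2]
    rw [monoA_monoA 1 1 (z ^ m) 1 (z ^ m) 1 (m:ℤ) B P D 1 0 0 1 (m:ℤ) B P D
      hne one_det hne (by simp) (by simp) (by ring) (by ring) (by ring) (by ring) x]
    rw [monoA_monoA z 1 1 1 (z ^ m) 1 1 0 0 1 (m:ℤ) B P D (m:ℤ) B P D
      one_det hne hne ?_ ?_ (by ring) (by ring) (by ring) (by ring) x]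
    · simp [zpow_natCast]
    · rw [zpow_natCast, hz]; simp
  calc monoE 1 1 m B P D hdet * (sigmaE z) ^ m * (monoE 1 1 m B P D hdet)⁻¹
      = sigmaE z * monoE 1 1 m B P D hdet * (monoE 1 1 m B P D hdet)⁻¹ := by rw [key]
    _ = sigmaE z := by rw [mul_inv_cancel_right]


section MatrixPart
open Polynomial Matrix


lemma charpoly_conj {k : Type*} [Field k] {n : ℕ} (P : GL (Fin n) k) (M : Matrix (Fin n) (Fin n) k) :
    ((P : Matrix (Fin n) (Fin n) k) * M * ((P⁻¹ : GL (Fin n) k) : Matrix (Fin n) (Fin n) k)).charpoly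
      = M.charpoly := by
  have h1 : Matrix.charmatrix ((P : Matrix (Fin n) (Fin n) k) * M * ((P⁻¹ : GL (Fin n) k) : Matrix (Fin n) (Fin n) k))
      = (C : k →+* k[X]).mapMatrix (P : Matrix (Fin n) (Fin n) k) * Matrix.charmatrix M
          * (C : k →+* k[X]).mapMatrix ((P⁻¹ : GL (Fin n) k) : Matrix (Fin n) (Fin n) k) := by
    unfold Matrix.charmatrix
    rw [mul_sub, sub_mul]
    congr 1
    · symm
      rw [← ((Matrix.scalar_commute (Polynomial.X : Polynomial k) (fun r' => Commute.all _ _)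
        ((C : k →+* k[X]).mapMatrix (P : Matrix (Fin n) (Fin n) k)))).eq, mul_assoc,
        ← _root_.map_mul, Units.mul_inv, _root_.map_one, mul_one]
    · rw [← _root_.map_mul, ← _root_.map_mul]
  have h2 : ((C : k →+* k[X]).mapMatrix (P : Matrix (Fin n) (Fin n) k)).det
      * ((C : k →+* k[X]).mapMatrix ((P⁻¹ : GL (Fin n) k) : Matrix (Fin n) (Fin n) k)).det = 1 := by
    rw [← Matrix.det_mul, ← _root_.map_mul, Units.mul_inv, _root_.map_one, Matrix.det_one]
  rw [Matrix.charpoly, Matrix.charpoly, h1, Matrix.det_mul, Matrix.det_mul, mul_right_comm,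
    h2, one_mul]

lemma eval_charpoly' {L : Type*} [Field L] {n : ℕ} (M : Matrix (Fin n) (Fin n) L) (μ : L) :
    M.charpoly.eval μ = (μ • (1 : Matrix (Fin n) (Fin n) L) - M).det := by
  rw [Matrix.charpoly, ← Polynomial.coe_evalRingHom, RingHom.map_det]
  congr 1
  ext i j
  by_cases hij : i = j <;>
    simp [Matrix.charmatrix_apply, hij, Matrix.one_apply, Matrix.diagonal_apply]

lemma eigen_of_root {L : Type*} [Field L] {n : ℕ} {M : Matrix (Fin n) (Fin n) L} {μ : L}
    (h : M.charpoly.IsRoot μ) : ∃ v, v ≠ 0 ∧ M *ᵥ v = μ • v := by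
  rw [IsRoot, eval_charpoly'] at h
  obtain ⟨v, hv0, hv⟩ := (Matrix.exists_mulVec_eq_zero_iff).2 h
  refine ⟨v, hv0, ?_⟩
  rw [Matrix.sub_mulVec, Matrix.smul_mulVec, Matrix.one_mulVec, sub_eq_zero] at hv
  exact hv.symm

lemma root_of_eigen {L : Type*} [Field L] {n : ℕ} {M : Matrix (Fin n) (Fin n) L} {μ : L}
    {v : Fin n → L} (hv0 : v ≠ 0) (hv : M *ᵥ v = μ • v) : M.charpoly.IsRoot μ := by
  rw [IsRoot, eval_charpoly']
  refine (Matrix.exists_mulVec_eq_zero_iff).1 ⟨v, hv0, ?_⟩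
  rw [Matrix.sub_mulVec, Matrix.smul_mulVec, Matrix.one_mulVec, hv, sub_self]

lemma eigen_pow {L : Type*} [Field L] {n : ℕ} {M : Matrix (Fin n) (Fin n) L} {μ : L}
    {v : Fin n → L} (hv : M *ᵥ v = μ • v) (j : ℕ) : (M ^ j) *ᵥ v = μ ^ j • v := by
  induction j with
  | zero => simp [Matrix.one_mulVec]
  | succ j ih =>
      rw [pow_succ', ← Matrix.mulVec_mulVec, ih, Matrix.mulVec_smul, hv, smul_smul, ← pow_succ]

lemma matrix_eq_one {L : Type*} [Field L] [IsAlgClosed L] [CharZero L] {n p : ℕ}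
    (hn : 0 < n) (hp : p.Prime) (hpn : n + 1 < p)
    (B : Matrix (Fin n) (Fin n) L) (hBp : B ^ p = 1)
    (hconj : ∀ m, 1 ≤ m → m < p → (B ^ m).charpoly = B.charpoly) : B = 1 := by
  classical
  have hL : (p : L) ≠ 0 := Nat.cast_ne_zero.2 hp.pos.ne'
  set χ := B.charpoly with hχ
  have hmonic : χ.Monic := B.charpoly_monic
  have hdeg : χ.natDegree = n := (B.charpoly_natDegree_eq_dim).trans (Fintype.card_fin n)
  have hχ0 : χ ≠ 0 := hmonic.ne_zero
  -- all roots are 1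
  have hroot1 : ∀ μ ∈ χ.roots, μ = 1 := by
    intro μ hμ
    obtain ⟨v, hv0, hv⟩ := eigen_of_root ((mem_roots hχ0).1 hμ)
    by_contra hμ1
    have hμp : μ ^ p = 1 := by
      have h2 := eigen_pow hv p
      rw [hBp, Matrix.one_mulVec] at h2
      obtain ⟨i, hi⟩ := Function.ne_iff.1 hv0
      have h3 := congrFun h2 i
      simp only [Pi.smul_apply, smul_eq_mul] at h3
      have h4 : μ ^ p * v i = 1 * v i := by rw [one_mul, ← h3]
      exact mul_right_cancel₀ hi h4
    have horder : orderOf μ = p := by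
      rcases hp.eq_one_or_self_of_dvd _ (orderOf_dvd_of_pow_eq_one hμp) with h1 | h1
      · exact absurd (orderOf_eq_one_iff.1 h1) hμ1
      · exact h1
    have hμ0 : μ ≠ 0 := by
      intro h0
      rw [h0, zero_pow hp.pos.ne'] at hμp
      exact zero_ne_one hμp
    have hkey : ∀ x y : ℕ, x < p → y < p → x ≤ y → μ ^ x = μ ^ y → x = y := by
      intro x y hx hy hxy he
      have h5 : μ ^ x * μ ^ (y - x) = μ ^ x * 1 := by
        rw [mul_one, ← pow_add, Nat.add_sub_cancel' hxy, he]
      have h6 : μ ^ (y - x) = 1 := mul_left_cancel₀ (pow_ne_zero _ hμ0) h5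
      have h7 := orderOf_dvd_of_pow_eq_one h6
      rw [horder] at h7
      rcases Nat.eq_zero_of_dvd_of_lt h7 (by omega) |>.symm with h8
      · omega
    have hinj : Set.InjOn (fun m => μ ^ m) (Finset.Ico 1 p) := by
      intro m1 h1 m2 h2 he
      simp only [Finset.coe_Ico, Set.mem_Ico] at h1 h2
      have he' : μ ^ m1 = μ ^ m2 := he
      rcases le_total m1 m2 with hle | hle
      · exact hkey m1 m2 h1.2 h2.2 hle he'
      · exact (hkey m2 m1 h2.2 h1.2 hle he'.symm).symm
    have hsub : (Finset.Ico 1 p).image (fun m => μ ^ m) ⊆ χ.roots.toFinset := by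
      intro x hx
      obtain ⟨m, hm, rfl⟩ := Finset.mem_image.1 hx
      rw [Finset.mem_Ico] at hm
      rw [Multiset.mem_toFinset, mem_roots hχ0]
      have hr : (B ^ m).charpoly.IsRoot (μ ^ m) := root_of_eigen hv0 (eigen_pow hv m)
      rwa [hconj m hm.1 hm.2] at hr
    have hcard : p - 1 ≤ n := by
      have h1 : ((Finset.Ico 1 p).image (fun m => μ ^ m)).card = p - 1 := by
        rw [Finset.card_image_of_injOn hinj, Nat.card_Ico]
      calc p - 1 = ((Finset.Ico 1 p).image (fun m => μ ^ m)).card := h1.symm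
        _ ≤ χ.roots.toFinset.card := Finset.card_le_card hsub
        _ ≤ Multiset.card χ.roots := χ.roots.toFinset_card_le
        _ ≤ χ.natDegree := χ.card_roots'
        _ = n := hdeg
    omega
  -- χ = (X - 1)^n
  have hsplits : χ.Splits := IsAlgClosed.splits χ
  have hcard : Multiset.card χ.roots = n := by
    rw [← hdeg]
    exact hsplits.natDegree_eq_card_roots.symm
  have hrepl : χ.roots = Multiset.replicate n 1 :=
    Multiset.eq_replicate.2 ⟨hcard, fun b hb => hroot1 b hb⟩
  have hfact : χ = (Polynomial.X - Polynomial.C 1) ^ n := by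
    have h2 := hsplits.eq_prod_roots_of_monic hmonic
    rw [hrepl, Multiset.map_replicate, Multiset.prod_replicate] at h2
    exact h2
  have hCH : (B - 1) ^ n = 0 := by
    have h2 := B.aeval_self_charpoly
    rw [← hχ, hfact, _root_.map_pow, _root_.map_sub, Polynomial.aeval_X, Polynomial.aeval_C] at h2
    rwa [_root_.map_one] at h2
  -- geometric series coprimality
  set g : Polynomial L := ∑ i ∈ Finset.range p, (Polynomial.X : Polynomial L) ^ i with hg
  have hgeom : g * (Polynomial.X - Polynomial.C 1) = Polynomial.X ^ p - Polynomial.C 1 := by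
    rw [hg, Polynomial.C_1, geom_sum_mul]
  have heval1 : g.eval 1 = p := by
    rw [hg]
    simp [Polynomial.eval_finset_sum]
  obtain ⟨q, hq⟩ := X_sub_C_dvd_sub_C_eval (a := (1:L)) (p := g)
  have hh : g = (Polynomial.X - Polynomial.C 1) * q + Polynomial.C (p : L) := by
    rw [← heval1]
    linear_combination hq
  have hcop : IsCoprime (((Polynomial.X - Polynomial.C 1 : Polynomial L)) ^ n) g := by
    refine IsCoprime.pow_left ?_
    refine ⟨- (Polynomial.C ((p : L))⁻¹ * q), Polynomial.C ((p : L))⁻¹, ?_⟩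
    have h5 : (- (Polynomial.C ((p:L))⁻¹ * q)) * (Polynomial.X - Polynomial.C 1) + Polynomial.C ((p:L))⁻¹ * g
        = Polynomial.C ((p:L))⁻¹ * Polynomial.C (p:L) := by
      rw [hh]; ring
    rw [← Polynomial.C_mul, inv_mul_cancel₀ hL, Polynomial.C_1] at h5
    exact h5
  obtain ⟨u, w, huw⟩ := hcop
  have hBpoly := congrArg (Polynomial.aeval B) huw
  simp only [_root_.map_add, _root_.map_mul, _root_.map_pow, _root_.map_sub, Polynomial.aeval_X, Polynomial.aeval_C,
    _root_.map_one, hCH, mul_zero, zero_add] at hBpoly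
  have hcomm : Polynomial.aeval B g * Polynomial.aeval B w = Polynomial.aeval B w * Polynomial.aeval B g := by
    rw [← _root_.map_mul, ← _root_.map_mul, mul_comm]
  have hunit : IsUnit (Polynomial.aeval B g) :=
    isUnit_iff_exists.2 ⟨Polynomial.aeval B w, hcomm.trans hBpoly, hBpoly⟩
  have hzero : Polynomial.aeval B g * (B - 1) = 0 := by
    have h6 := congrArg (Polynomial.aeval B) hgeom
    simp only [_root_.map_mul, _root_.map_sub, _root_.map_pow, Polynomial.aeval_X, Polynomial.aeval_C,
      _root_.map_one, hBp, sub_self] at h6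
    exact h6
  have h7 : B - 1 = 0 := hunit.mul_left_cancel (by rw [hzero, mul_zero])
  rw [sub_eq_zero] at h7
  exact h7

lemma main_aux (k : Type*) [Field k] [CharZero k] (n : ℕ) (hn : 0 < n)
    (φ : Cremona →* GL (Fin n) k) (hinj : Function.Injective φ) : False := by
  obtain ⟨p, hpge, hp⟩ := Nat.exists_infinite_primes (n + 2)
  haveI : Fact p.Prime := ⟨hp⟩
  haveI : NeZero p := ⟨hp.pos.ne'⟩
  have hprim := Complex.isPrimitiveRoot_exp p hp.pos.ne'
  obtain ⟨zu, hzu⟩ := hprim.isUnit hp.pos.ne'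
  have hzup : zu ^ p = 1 := by
    apply Units.ext
    rw [Units.val_pow_eq_pow_val, hzu, hprim.pow_eq_one, Units.val_one]
  have hzu1 : (zu : ℂ) ≠ 1 := by rw [hzu]; exact hprim.ne_one hp.one_lt
  set σ := sigmaE zu with hσdef
  have hσp : σ ^ p = 1 := sigmaE_order zu p hzup
  have hσne : σ ≠ 1 := sigmaE_ne_one zu hzu1
  set G := φ σ with hGdef
  set A : Matrix (Fin n) (Fin n) k := (G : Matrix (Fin n) (Fin n) k) with hAdef
  have hAp : A ^ p = 1 := by
    have hG : G ^ p = 1 := by rw [hGdef, ← _root_.map_pow, hσp, _root_.map_one]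
    calc A ^ p = ((G ^ p : GL (Fin n) k) : Matrix (Fin n) (Fin n) k) :=
          (Units.val_pow_eq_pow_val _ _).symm
      _ = 1 := by rw [hG, Units.val_one]
  have hconjA : ∀ m, 1 ≤ m → m < p → (A ^ m).charpoly = A.charpoly := by
    intro m hm1 hmp
    have hmz : ((m : ℕ) : ZMod p) ≠ 0 := by
      intro h0
      have h1 := (ZMod.natCast_eq_zero_iff m p).1 h0
      have h2 := Nat.le_of_dvd (by omega) h1
      omega
    set d0 : ℕ := ((m : ZMod p)⁻¹).val with hd0
    have hdvd : (p : ℤ) ∣ (m : ℤ) * d0 - 1 := by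
      have h1 : (((m : ℤ) * d0 - 1 : ℤ) : ZMod p) = 0 := by
        push_cast
        rw [hd0, ZMod.natCast_val, ZMod.cast_id, mul_inv_cancel₀ hmz, sub_self]
      exact (ZMod.intCast_zmod_eq_zero_iff_dvd _ p).1 h1
    obtain ⟨Bz, hBz⟩ := hdvd
    have hdet : (m : ℤ) * (d0 : ℤ) - Bz * p = 1 := by linear_combination hBz
    obtain ⟨τ, hτ⟩ := conj_rel zu p hzup m Bz d0 hdet
    have hGL : (φ τ) * G ^ m * (φ τ)⁻¹ = G := by
      rw [hGdef, ← _root_.map_pow, ← map_inv, ← _root_.map_mul, ← _root_.map_mul, hτ]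
    have hmat : ((φ τ : GL (Fin n) k) : Matrix (Fin n) (Fin n) k) * (A ^ m)
        * (((φ τ)⁻¹ : GL (Fin n) k) : Matrix (Fin n) (Fin n) k) = A := by
      have h3 := congrArg (Units.val) hGL
      rw [Units.val_mul, Units.val_mul, Units.val_pow_eq_pow_val] at h3
      exact h3
    calc (A ^ m).charpoly
        = (((φ τ : GL (Fin n) k) : Matrix (Fin n) (Fin n) k) * (A ^ m)
            * (((φ τ)⁻¹ : GL (Fin n) k) : Matrix (Fin n) (Fin n) k)).charpoly :=
          (charpoly_conj (φ τ) (A ^ m)).symm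
      _ = A.charpoly := by rw [hmat]
  set L := AlgebraicClosure k with hLdef
  haveI : CharZero L := charZero_of_injective_algebraMap (algebraMap k L).injective
  set B : Matrix (Fin n) (Fin n) L := A.map (algebraMap k L) with hBdef
  have hBmap : ∀ j : ℕ, (A ^ j).map (algebraMap k L) = B ^ j := by
    intro j
    rw [hBdef, ← RingHom.mapMatrix_apply, ← RingHom.mapMatrix_apply, _root_.map_pow]
  have hBp : B ^ p = 1 := by
    rw [← hBmap, hAp, ← RingHom.mapMatrix_apply, _root_.map_one]
  have hBconj : ∀ m, 1 ≤ m → m < p → (B ^ m).charpoly = B.charpoly := by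
    intro m h1 h2
    rw [← hBmap, Matrix.charpoly_map, hconjA m h1 h2, hBdef, Matrix.charpoly_map]
  have hB1 : B = 1 := matrix_eq_one hn hp (by omega) B hBp hBconj
  have hA1 : A = 1 := by
    apply Matrix.ext
    intro i j
    apply (algebraMap k L).injective
    have h4 : B i j = (1 : Matrix (Fin n) (Fin n) L) i j := by rw [hB1]
    rw [hBdef, Matrix.map_apply] at h4
    rw [h4]
    by_cases hij : i = j <;> simp [Matrix.one_apply, hij]
  have hG1 : G = 1 := by
    apply Units.ext
    rw [Units.val_one]
    rw [hAdef] at hA1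
    exact hA1
  exact hσne (hinj (by rw [← hGdef, hG1, _root_.map_one]))

end MatrixPart

end CremonaAux

/-- The Cremona group does not embed in `GL_n(k)` for `k` a field of
characteristic zero. -/
theorem cremona_not_linear (k : Type*) [Field k] [CharZero k] (n : ℕ) (hn : 0 < n)
    (φ : Cremona →* GL (Fin n) k) : ¬ Function.Injective φ := by
  intro hinj
  exact CremonaAux.main_aux k n hn φ hinj
end
end

section
/- Let G be the group of affine transformations of the complex line, i.e. the group of bijections of ℂ of the form z ↦ αz + β with α ∈ ℂ* and β ∈ ℂ (equivalently, the semidirect product ℂ ⋊ ℂ*). Then every group automorphism of G is obtained from an inner automorphism and the action of a field automorphism of ℂ: for every group automorphism φ of G there exist g ∈ G and a field automorphism κ of ℂ such that φ(f) = g ∘ κ(f) ∘ g⁻¹ for all f ∈ G, where κ(f) denotes the transformation z ↦ κ(α)z + κ(β) when f is z ↦ αz + β. -/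
noncomputable section

/-- The group of affine transformations `z ↦ αz + β` (`α ∈ ℂ*`, `β ∈ ℂ`) of the
complex line, realized as the group of affine equivalences of `ℂ`. -/
abbrev AffC : Type := ℂ ≃ᵃ[ℂ] ℂ

/-- the affine map `z ↦ a*z + b`. -/
noncomputable def aff (a b : ℂ) (ha : a ≠ 0) : AffC :=
  (LinearEquiv.smulOfNeZero ℂ ℂ a ha).toAffineEquiv.trans (AffineEquiv.constVAdd ℂ ℂ b)

lemma aff_apply (a b : ℂ) (ha : a ≠ 0) (z : ℂ) : aff a b ha z = a * z + b := by
  simp [aff, LinearEquiv.smulOfNeZero, LinearEquiv.smulOfUnit, Units.smul_def, smul_eq_mul, add_comm,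
    DistribMulAction.toLinearEquiv, DistribMulAction.toLinearMap]

/-- slope -/
def A (f : AffC) : ℂ := f.linear 1

lemma apply_eq (f : AffC) (z : ℂ) : f z = A f * z + f 0 := by
  rw [show f z = f (z +ᵥ (0:ℂ)) by simp, AffineEquiv.map_vadd]
  simp [A, show f.linear z = z • f.linear 1 by rw [← f.linear.map_smul]; simp, smul_eq_mul]
  ring

lemma A_ne_zero (f : AffC) : A f ≠ 0 := by
  intro h
  have h1 : f 1 = f 0 := by rw [apply_eq, h]; ring
  exact one_ne_zero (f.injective h1)

lemma A_aff (a b : ℂ) (ha : a ≠ 0) : A (aff a b ha) = a := by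
  have h0 := aff_apply a b ha 0
  have h1 := aff_apply a b ha 1
  rw [apply_eq] at h1
  rw [h0] at h1; simp at h1; linear_combination h1

lemma ext_of (f g : AffC) (h1 : A f = A g) (h2 : f 0 = g 0) : f = g := by
  ext z; rw [apply_eq f z, apply_eq g z, h1, h2]

lemma A_mul (f g : AffC) : A (f * g) = A f * A g := by
  have h := apply_eq (f * g) 1
  have h0 : (f * g) (0:ℂ) = f (g 0) := rfl
  have h1 : (f * g) (1:ℂ) = f (g 1) := rfl
  rw [h0, h1] at h
  rw [apply_eq f (g 1), apply_eq g 1, apply_eq f (g 0), apply_eq g 0] at h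
  linear_combination -h

lemma mul_zero_eq (f g : AffC) : (f * g) 0 = A f * g 0 + f 0 := by
  have h0 : (f * g) (0:ℂ) = f (g 0) := rfl
  rw [h0, apply_eq f (g 0)]

lemma A_one : A (1 : AffC) = 1 := by
  have := apply_eq (1 : AffC) 1
  exact (by simpa using this : (1:ℂ) = A 1).symm

lemma A_inv (f : AffC) : A f⁻¹ = (A f)⁻¹ := by
  have h := A_mul f⁻¹ f
  rw [inv_mul_cancel, A_one] at h
  exact eq_inv_of_mul_eq_one_left h.symm

lemma commute_iff (f g : AffC) : f * g = g * f ↔ A f * g 0 + f 0 = A g * f 0 + g 0 := by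
  constructor
  · intro h
    have := congrArg (fun u : AffC => u 0) h
    simpa [mul_zero_eq] using this
  · intro h
    apply ext_of
    · rw [A_mul, A_mul]; ring
    · rw [mul_zero_eq, mul_zero_eq, h]

/-- group-theoretic characterization of translations -/
lemma translation_iff (f : AffC) :
    A f = 1 ↔ ∀ h : AffC, f * (h * f * h⁻¹) = (h * f * h⁻¹) * f := by
  constructor
  · intro hf h
    rw [commute_iff]
    have hA : A (h * f * h⁻¹) = 1 := by
      rw [A_mul, A_mul, A_inv, hf]; field_simp; exact div_self (A_ne_zero h)
    rw [hf, hA]; ring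
  · intro H
    by_contra hf
    have h := H (aff 1 1 one_ne_zero)
    rw [commute_iff] at h
    set t : AffC := aff 1 1 one_ne_zero with ht
    have hAt : A t = 1 := A_aff 1 1 one_ne_zero
    have hA : A (t * f * t⁻¹) = A f := by
      rw [A_mul, A_mul, A_inv, hAt]; field_simp
    have hz : (t * f * t⁻¹) 0 = f 0 + A f * (t⁻¹ 0) + 1 := by
      rw [mul_zero_eq, mul_zero_eq, A_mul, hAt, aff_apply]
      ring
    have hti : (t⁻¹ : AffC) 0 = -1 := by
      have : t (t⁻¹ 0) = (0:ℂ) := t.apply_symm_apply 0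
      rw [ht, aff_apply] at this
      linear_combination this
    rw [hA, hz, hti] at h
    apply hf
    have : (A f - 1) * (A f - 1) = 0 := by linear_combination -h
    have := mul_self_eq_zero.mp this
    linear_combination this

lemma pres (φ : AffC ≃* AffC) (f : AffC) (hf : A f = 1) : A (φ f) = 1 := by
  rw [translation_iff] at hf ⊢
  intro h
  have h1 := hf (φ.symm h)
  have h2 := congrArg φ h1
  simpa [map_mul, map_inv] using h2

/-- translation by β -/
noncomputable def tr (β : ℂ) : AffC := aff 1 β one_ne_zero

lemma tr_apply (β z : ℂ) : tr β z = z + β := by rw [tr, aff_apply]; ring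

lemma A_tr (β : ℂ) : A (tr β) = 1 := A_aff 1 β one_ne_zero

lemma tr_inj {a b : ℂ} (h : tr a = tr b) : a = b := by
  have := congrArg (fun u : AffC => u 0) h
  simpa [tr_apply] using this

lemma tr_mul (a b : ℂ) : tr a * tr b = tr (a + b) := by
  apply ext_of
  · rw [A_mul, A_tr, A_tr, A_tr]; ring
  · rw [mul_zero_eq, A_tr, tr_apply, tr_apply, tr_apply]; ring

lemma tr_zero : tr 0 = 1 := by
  apply ext_of
  · rw [A_tr, A_one]
  · simp [tr_apply]

lemma conj_tr (f : AffC) (β : ℂ) : f * tr β * f⁻¹ = tr (A f * β) := by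
  have hinv : A f * (f⁻¹ 0) + f 0 = 0 := by
    have : f (f⁻¹ 0) = (0:ℂ) := f.apply_symm_apply 0
    rw [apply_eq] at this; exact this
  apply ext_of
  · rw [A_mul, A_mul, A_inv, A_tr, A_tr]
    field_simp
    exact div_self (A_ne_zero f)
  · rw [mul_zero_eq, mul_zero_eq, A_mul, A_tr, tr_apply, tr_apply]
    linear_combination hinv

/-- Every group automorphism of the affine group of the complex line is obtained
from an inner automorphism and the action of a field automorphism of `ℂ`:
`φ(f) = g ∘ κ(f) ∘ g⁻¹` where `κ(f) = κ ∘ f ∘ κ⁻¹` sends `z ↦ αz+β` to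
`z ↦ κ(α)z+κ(β)`. -/
theorem affine_line_automorphisms (φ : AffC ≃* AffC) :
    ∃ (g : AffC) (κ : ℂ ≃+* ℂ),
      ∀ (f : AffC) (z : ℂ), φ f z = g (κ (f (κ.symm (g.symm z)))) := by
  classical
  set ψ : ℂ → ℂ := fun β => (φ (tr β)) 0 with hψ
  have hφtr : ∀ β, φ (tr β) = tr (ψ β) := by
    intro β
    apply ext_of
    · rw [pres φ (tr β) (A_tr β), A_tr]
    · rw [tr_apply]; ring
  have hψ_add : ∀ a b, ψ (a + b) = ψ a + ψ b := by
    intro a b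
    apply tr_inj
    rw [← hφtr, ← tr_mul a b, ← tr_mul (ψ a) (ψ b), ← hφtr, ← hφtr, ← map_mul]
  have hψ0 : ψ 0 = 0 := by
    apply tr_inj
    rw [← hφtr, tr_zero, map_one]
  have hψ_inj : Function.Injective ψ := by
    intro a b h
    apply tr_inj
    apply φ.injective
    rw [hφtr, hφtr, h]
  have hψ_surj : Function.Surjective ψ := by
    intro γ
    refine ⟨(φ.symm (tr γ)) 0, ?_⟩
    apply tr_inj
    rw [← hφtr]
    have hf : φ.symm (tr γ) = tr ((φ.symm (tr γ)) 0) := by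
      apply ext_of
      · rw [pres φ.symm (tr γ) (A_tr γ), A_tr]
      · rw [tr_apply]; ring
    rw [← hf, φ.apply_symm_apply]
  have hkey : ∀ (f : AffC) (β : ℂ), ψ (A f * β) = A (φ f) * ψ β := by
    intro f β
    apply tr_inj
    rw [← hφtr, ← conj_tr f β, map_mul, map_mul, map_inv, hφtr, conj_tr]
  set c : ℂ := ψ 1 with hc_def
  have hc : c ≠ 0 := by
    intro h
    exact one_ne_zero (hψ_inj (by rw [hψ0, ← h]))
  have hκA : ∀ (α : ℂ) (hα : α ≠ 0), A (φ (aff α 0 hα)) = ψ α / c := by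
    intro α hα
    have h := hkey (aff α 0 hα) 1
    rw [A_aff, mul_one, ← hc_def] at h
    rw [h]; field_simp
  have hψ_mul : ∀ (α β : ℂ), α ≠ 0 → ψ (α * β) = ψ α / c * ψ β := by
    intro α β hα
    have h := hkey (aff α 0 hα) β
    rw [A_aff, hκA α hα] at h
    exact h
  let κ' : ℂ →+* ℂ :=
    { toFun := fun x => ψ x / c
      map_one' := by show ψ 1 / c = 1; rw [← hc_def]; field_simp
      map_mul' := by
        intro x y
        show ψ (x * y) / c = ψ x / c * (ψ y / c)
        by_cases hx : x = 0
        · simp [hx, hψ0]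
        · rw [hψ_mul x y hx]; field_simp
      map_zero' := by simp only [hψ0]; simp
      map_add' := by intro x y; show ψ (x + y) / c = ψ x / c + ψ y / c; rw [hψ_add]; ring }
  have hκ'_apply : ∀ x, κ' x = ψ x / c := fun _ => rfl
  have hκ'bij : Function.Bijective κ' := by
    constructor
    · intro a b h
      rw [hκ'_apply, hκ'_apply, div_eq_div_iff hc hc] at h
      exact hψ_inj (mul_right_cancel₀ hc h)
    · intro y
      obtain ⟨x, hx⟩ := hψ_surj (y * c)
      refine ⟨x, ?_⟩
      rw [hκ'_apply, hx]
      field_simp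
  let κ : ℂ ≃+* ℂ := RingEquiv.ofBijective κ' hκ'bij
  have hκ_apply : ∀ x, κ x = ψ x / c := fun _ => rfl
  have hψc : ∀ x, ψ x = c * κ x := by
    intro x; rw [hκ_apply]; field_simp
  set b : ℂ := (φ (aff (-1) 0 (by norm_num))) 0 / 2 with hb_def
  have hκm1 : κ (-1) = -1 := by rw [map_neg, map_one]
  have hB : ∀ (α : ℂ) (hα : α ≠ 0), (φ (aff α 0 hα)) 0 = (1 - κ α) * b := by
    intro α hα
    have hcomm : aff α 0 hα * aff (-1) 0 (by norm_num)
        = aff (-1) 0 (by norm_num) * aff α 0 hα := by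
      rw [commute_iff, aff_apply, aff_apply]; ring
    have h := congrArg φ hcomm
    rw [map_mul, map_mul, commute_iff] at h
    rw [hκA α hα, hκA (-1) (by norm_num)] at h
    have hm1 : ψ (-1) / c = -1 := by rw [← hκ_apply, hκm1]
    rw [hm1] at h
    rw [← hκ_apply] at h
    rw [hb_def]
    linear_combination h / 2
  refine ⟨aff c b hc, κ, ?_⟩
  intro f z
  have hα : A f ≠ 0 := A_ne_zero f
  have hfdec : f = tr (f 0) * aff (A f) 0 hα := by
    apply ext_of
    · rw [A_mul, A_tr, A_aff, one_mul]
    · rw [mul_zero_eq, A_tr, tr_apply, aff_apply]; ring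
  have hφf : φ f z = κ (A f) * z + ((1 - κ (A f)) * b + c * κ (f 0)) := by
    conv_lhs => rw [hfdec, map_mul]
    have : (φ (tr (f 0)) * φ (aff (A f) 0 hα)) z
        = φ (tr (f 0)) (φ (aff (A f) 0 hα) z) := rfl
    rw [this, hφtr, tr_apply, apply_eq (φ (aff (A f) 0 hα)) z, hκA (A f) hα,
      ← hκ_apply, hB (A f) hα, hψc]
    ring
  have hgs : (aff c b hc).symm z = (z - b) / c := by
    apply (aff c b hc).injective
    rw [AffineEquiv.apply_symm_apply, aff_apply]
    field_simp
    ring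
  rw [hφf, hgs, apply_eq f (κ.symm ((z - b) / c)), aff_apply, map_add, map_mul,
    RingEquiv.apply_symm_apply]
  field_simp
  ring
end
end

section
/- For every integer k ≥ 2, the matrices [[1,k],[0,1]] and [[1,0],[k,1]] generate a free subgroup of rank 2 in SL₂(ℤ): the group homomorphism from the free group on two generators to SL₂(ℤ) sending the two generators respectively to [[1,k],[0,1]] and [[1,0],[k,1]] is injective. -/
noncomputable section

/-- The matrix `[[1,k],[0,1]]` as an element of `SL₂(ℤ)`. -/
def upperMat (k : ℕ) : Matrix.SpecialLinearGroup (Fin 2) ℤ :=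
  ⟨!![1, (k : ℤ); 0, 1], by simp [Matrix.det_fin_two_of]⟩

/-- The matrix `[[1,0],[k,1]]` as an element of `SL₂(ℤ)`. -/
def lowerMat (k : ℕ) : Matrix.SpecialLinearGroup (Fin 2) ℤ :=
  ⟨!![1, 0; (k : ℤ), 1], by simp [Matrix.det_fin_two_of]⟩

namespace Sl2PingPong

lemma one_le_sq_of_ne {x : ℤ} (hx : x ≠ 0) : 1 ≤ x ^ 2 := by
  nlinarith [Int.one_le_abs hx, sq_abs x, abs_nonneg x]

lemma sq_pos_of_ne {x : ℤ} (hx : x ≠ 0) : 0 < x ^ 2 :=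
  lt_of_le_of_ne (sq_nonneg x) (Ne.symm (pow_ne_zero 2 hx))

section
variable {K x y : ℤ}

lemma keyA1 (hK : 2 ≤ K) (h : x ^ 2 ≤ y ^ 2 ∨ 0 ≤ x * y) :
    y ^ 2 ≤ (x + K * y) ^ 2 ∧ 0 ≤ (x + K * y) * y := by
  have h0 : (0:ℤ) ≤ K := by linarith
  have h2 : (0:ℤ) ≤ K - 2 := by linarith
  rcases h with h | h
  · constructor
    · nlinarith [mul_nonneg h0 (sq_nonneg (x + y)), mul_nonneg (mul_nonneg h0 h2) (sq_nonneg y),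
        mul_nonneg (show (0:ℤ) ≤ K - 1 by linarith) (sub_nonneg.2 h)]
    · nlinarith [sq_nonneg (x + y), mul_nonneg h2 (sq_nonneg y)]
  · constructor
    · nlinarith [mul_nonneg h0 h, mul_nonneg (mul_nonneg h0 h0) (sq_nonneg y), sq_nonneg x,
        sq_nonneg y, mul_nonneg h2 (sq_nonneg y)]
    · nlinarith [mul_nonneg h0 (sq_nonneg y), h]

lemma keyA2 (hK : 2 ≤ K) (h : x ^ 2 < y ^ 2 ∨ x * y < 0) :
    y ^ 2 < (x - K * y) ^ 2 ∧ (x - K * y) * y < 0 := by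
  have h0 : (0:ℤ) ≤ K := by linarith
  have h2 : (0:ℤ) ≤ K - 2 := by linarith
  rcases h with h | h
  · constructor
    · nlinarith [mul_nonneg h0 (sq_nonneg (x - y)), mul_nonneg (mul_nonneg h0 h2) (sq_nonneg y),
        mul_nonneg (show (0:ℤ) ≤ K - 1 by linarith) (le_of_lt (sub_pos.2 h))]
    · nlinarith [sq_nonneg (x - y), mul_nonneg h2 (sq_nonneg y)]
  · have hy : y ≠ 0 := by rintro rfl; simp at h
    constructor
    · nlinarith [mul_nonneg h0 (le_of_lt (neg_pos.2 h)), sq_pos_of_ne hy,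
        mul_nonneg (mul_nonneg h0 h0) (sq_nonneg y), mul_nonneg h2 (sq_nonneg y)]
    · nlinarith [mul_nonneg h0 (sq_nonneg y), sq_pos_of_ne hy, mul_nonneg h2 (sq_nonneg y)]

lemma keyB1 (hK : 2 ≤ K) (hne : x ≠ 0 ∨ y ≠ 0) (h : y ^ 2 < x ^ 2 ∨ 0 ≤ x * y) :
    x ^ 2 < (K * x + y) ^ 2 ∧ 0 ≤ x * (K * x + y) := by
  have h0 : (0:ℤ) ≤ K := by linarith
  have h2 : (0:ℤ) ≤ K - 2 := by linarith
  rcases h with h | h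
  · constructor
    · nlinarith [mul_nonneg h0 (sq_nonneg (x + y)), mul_nonneg (mul_nonneg h0 h2) (sq_nonneg x),
        mul_nonneg (show (0:ℤ) ≤ K - 1 by linarith) (le_of_lt (sub_pos.2 h))]
    · nlinarith [sq_nonneg (x + y), mul_nonneg h2 (sq_nonneg x)]
  · rcases eq_or_ne x 0 with rfl | hx
    · have hy : y ≠ 0 := by tauto
      constructor
      · simpa using sq_pos_of_ne hy
      · simp
    · have hx2 := one_le_sq_of_ne hx
      constructor
      · nlinarith [mul_nonneg h0 h, mul_nonneg (mul_nonneg h0 h0) (sq_nonneg x),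
          mul_nonneg h2 (sq_nonneg x)]
      · nlinarith [mul_nonneg h0 (sq_nonneg x), h]

lemma keyB2 (hK : 2 ≤ K) (hne : x ≠ 0 ∨ y ≠ 0) (h : y ^ 2 ≤ x ^ 2 ∨ x * y < 0) :
    x ^ 2 ≤ (y - K * x) ^ 2 ∧ x * (y - K * x) < 0 := by
  have h0 : (0:ℤ) ≤ K := by linarith
  have h2 : (0:ℤ) ≤ K - 2 := by linarith
  have hx : x ≠ 0 := by
    rintro rfl
    rcases h with h | h
    · have hy : y = 0 := by nlinarith [sq_nonneg y]
      rcases hne with h' | h' <;> simp_all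
    · simp at h
  have hx2 := one_le_sq_of_ne hx
  rcases h with h | h
  · rcases le_or_gt 0 (x * y) with hxy | hxy
    · constructor
      · rcases lt_or_lt_iff_ne.2 hx with hx' | hx'
        · -- x < 0, so y ≤ 0 and x ≤ y
          have hy0 : y ≤ 0 := by nlinarith
          have hyx : x ≤ y := by nlinarith
          nlinarith [mul_nonneg (show (0:ℤ) ≤ y - (K+1)*x by nlinarith)
            (show (0:ℤ) ≤ y - (K-1)*x by nlinarith)]
        · -- 0 < x, so 0 ≤ y ≤ x
          have hy0 : 0 ≤ y := by nlinarith
          have hyx : y ≤ x := by nlinarith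
          nlinarith [mul_nonneg (show (0:ℤ) ≤ (K+1)*x - y by nlinarith)
            (show (0:ℤ) ≤ (K-1)*x - y by nlinarith)]
      · nlinarith [mul_nonneg h0 hxy, mul_nonneg h2 (sq_nonneg x)]
    · constructor
      · nlinarith [mul_nonneg h0 (sq_nonneg (x - y)), mul_nonneg (mul_nonneg h0 h2) (sq_nonneg x),
          mul_nonneg (show (0:ℤ) ≤ K - 1 by linarith) (sub_nonneg.2 h)]
      · nlinarith [sq_nonneg (x - y), mul_nonneg h2 (sq_nonneg x)]
  · constructor
    · nlinarith [mul_nonneg h0 (le_of_lt (neg_pos.2 h)), mul_nonneg h2 (sq_nonneg x),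
        mul_nonneg (mul_nonneg h0 h2) (sq_nonneg x)]
    · nlinarith [mul_nonneg h0 (sq_nonneg x), sq_pos_of_ne hx, mul_nonneg h2 (sq_nonneg x)]

end

abbrev SL := Matrix.SpecialLinearGroup (Fin 2) ℤ

/-- Nonzero integer vectors. -/
abbrev V := {v : Fin 2 → ℤ // v ≠ 0}

lemma mulVec_ne_zero (g : SL) {v : Fin 2 → ℤ} (hv : v ≠ 0) :
    (g : Matrix (Fin 2) (Fin 2) ℤ).mulVec v ≠ 0 := by
  intro h
  apply hv
  have key : ((g⁻¹ : SL) : Matrix (Fin 2) (Fin 2) ℤ) * (g : Matrix (Fin 2) (Fin 2) ℤ) = 1 := by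
    rw [← Matrix.SpecialLinearGroup.coe_mul, inv_mul_cancel,
      Matrix.SpecialLinearGroup.coe_one]
  have h2 : ((g⁻¹ : SL) : Matrix (Fin 2) (Fin 2) ℤ).mulVec
      ((g : Matrix (Fin 2) (Fin 2) ℤ).mulVec v) = 0 := by
    rw [h, Matrix.mulVec_zero]
  rwa [Matrix.mulVec_mulVec, key, Matrix.one_mulVec] at h2

instance : MulAction SL V where
  smul g v := ⟨(g : Matrix (Fin 2) (Fin 2) ℤ).mulVec v.1, mulVec_ne_zero g v.2⟩
  one_smul v := Subtype.ext (by
    show ((1 : SL) : Matrix (Fin 2) (Fin 2) ℤ).mulVec v.1 = v.1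
    rw [Matrix.SpecialLinearGroup.coe_one, Matrix.one_mulVec])
  mul_smul g h v := Subtype.ext (by
    show ((g * h : SL) : Matrix (Fin 2) (Fin 2) ℤ).mulVec v.1 =
      (g : Matrix (Fin 2) (Fin 2) ℤ).mulVec ((h : Matrix (Fin 2) (Fin 2) ℤ).mulVec v.1)
    rw [Matrix.mulVec_mulVec, Matrix.SpecialLinearGroup.coe_mul])

lemma smul_coe (g : SL) (v : V) :
    (g • v).1 = (g : Matrix (Fin 2) (Fin 2) ℤ).mulVec v.1 := rfl

lemma upper_smul (k : ℕ) (v : V) :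
    (upperMat k • v).1 = ![v.1 0 + (k : ℤ) * v.1 1, v.1 1] := by
  funext i
  rw [smul_coe]
  fin_cases i <;>
    simp [upperMat, Matrix.mulVec, dotProduct, Fin.sum_univ_two]

lemma lower_smul (k : ℕ) (v : V) :
    (lowerMat k • v).1 = ![v.1 0, (k : ℤ) * v.1 0 + v.1 1] := by
  funext i
  rw [smul_coe]
  fin_cases i <;>
    simp [lowerMat, Matrix.mulVec, dotProduct, Fin.sum_univ_two]

lemma upper_inv (k : ℕ) :
    (upperMat k)⁻¹ = (⟨!![1, -(k : ℤ); 0, 1], by simp [Matrix.det_fin_two_of]⟩ : SL) := by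
  apply inv_eq_of_mul_eq_one_right
  apply Subtype.ext
  show (upperMat k : Matrix (Fin 2) (Fin 2) ℤ) * !![1, -(k : ℤ); 0, 1] = 1
  simp [upperMat, Matrix.mul_fin_two, Matrix.one_fin_two]

lemma lower_inv (k : ℕ) :
    (lowerMat k)⁻¹ = (⟨!![1, 0; -(k : ℤ), 1], by simp [Matrix.det_fin_two_of]⟩ : SL) := by
  apply inv_eq_of_mul_eq_one_right
  apply Subtype.ext
  show (lowerMat k : Matrix (Fin 2) (Fin 2) ℤ) * !![1, 0; -(k : ℤ), 1] = 1
  simp [lowerMat, Matrix.mul_fin_two, Matrix.one_fin_two]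

lemma upper_inv_smul (k : ℕ) (v : V) :
    ((upperMat k)⁻¹ • v).1 = ![v.1 0 - (k : ℤ) * v.1 1, v.1 1] := by
  rw [upper_inv]
  funext i
  erw [smul_coe]
  fin_cases i <;>
    simp [Matrix.mulVec, dotProduct, Fin.sum_univ_two] <;> ring

lemma lower_inv_smul (k : ℕ) (v : V) :
    ((lowerMat k)⁻¹ • v).1 = ![v.1 0, v.1 1 - (k : ℤ) * v.1 0] := by
  rw [lower_inv]
  funext i
  erw [smul_coe]
  fin_cases i <;>
    simp [Matrix.mulVec, dotProduct, Fin.sum_univ_two] <;> ring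

/-- The ping-pong `X` sets. -/
def Xs : Bool → Set V
  | true => {v | (v.1 1) ^ 2 ≤ (v.1 0) ^ 2 ∧ 0 ≤ v.1 0 * v.1 1}
  | false => {v | (v.1 0) ^ 2 < (v.1 1) ^ 2 ∧ 0 ≤ v.1 0 * v.1 1}

/-- The ping-pong `Y` sets. -/
def Ys : Bool → Set V
  | true => {v | (v.1 1) ^ 2 < (v.1 0) ^ 2 ∧ v.1 0 * v.1 1 < 0}
  | false => {v | (v.1 0) ^ 2 ≤ (v.1 1) ^ 2 ∧ v.1 0 * v.1 1 < 0}

lemma vec_nonzero (v : V) : v.1 0 ≠ 0 ∨ v.1 1 ≠ 0 := by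
  by_contra h
  push_neg at h
  apply v.2
  funext i
  fin_cases i <;> simp [h.1, h.2]

end Sl2PingPong

open Sl2PingPong in
/-- For `k ≥ 2`, the matrices `[[1,k],[0,1]]` and `[[1,0],[k,1]]` generate a free
subgroup of rank `2` in `SL₂(ℤ)`: the homomorphism from the free group on two
generators sending them respectively to these matrices is injective. -/
theorem free_subgroup_of_sl2 (k : ℕ) (hk : 2 ≤ k) :
    Function.Injective
      (FreeGroup.lift (fun b : Bool => if b then upperMat k else lowerMat k) :
        FreeGroup Bool →* Matrix.SpecialLinearGroup (Fin 2) ℤ) := by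
  have hK : (2 : ℤ) ≤ (k : ℤ) := by exact_mod_cast hk
  apply FreeGroup.injective_lift_of_ping_pong _ Xs Ys
  · -- nonempty
    intro b
    cases b
    · exact ⟨⟨![0, 1], by simp [funext_iff, Fin.forall_fin_two]⟩, by norm_num [Xs]⟩
    · exact ⟨⟨![1, 0], by simp [funext_iff, Fin.forall_fin_two]⟩, by norm_num [Xs]⟩
  · -- X pairwise disjoint
    intro i j hij
    rw [Function.onFun, Set.disjoint_left]
    intro v hv1 hv2
    cases i <;> cases j <;> simp_all [Xs] <;> omega
  · -- Y pairwise disjoint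
    intro i j hij
    rw [Function.onFun, Set.disjoint_left]
    intro v hv1 hv2
    cases i <;> cases j <;> simp_all [Ys] <;> omega
  · -- X disjoint Y
    intro i j
    rw [Set.disjoint_left]
    intro v hv1 hv2
    cases i <;> cases j <;> simp_all [Xs, Ys] <;> omega
  · -- a i • (Y i)ᶜ ⊆ X i
    intro b
    rintro _ ⟨v, hv, rfl⟩
    cases b
    · -- lower matrix B, B(x,y) = (x, kx+y)
      show lowerMat k • v ∈ Xs false
      simp only [Set.mem_compl_iff, Ys, Set.mem_setOf_eq, not_and_or, not_le, not_lt] at hv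
      have hres := keyB1 hK (vec_nonzero v) (by tauto : (v.1 1) ^ 2 < (v.1 0) ^ 2 ∨ 0 ≤ v.1 0 * v.1 1)
      simp only [Xs, Set.mem_setOf_eq, lower_smul]
      simpa using hres
    · -- upper matrix A, A(x,y) = (x+ky, y)
      show upperMat k • v ∈ Xs true
      simp only [Set.mem_compl_iff, Ys, Set.mem_setOf_eq, not_and_or, not_le, not_lt] at hv
      have hres := keyA1 hK (by tauto : (v.1 0) ^ 2 ≤ (v.1 1) ^ 2 ∨ 0 ≤ v.1 0 * v.1 1)
      simp only [Xs, Set.mem_setOf_eq, upper_smul]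
      simpa using hres
  · -- a⁻¹ i • (X i)ᶜ ⊆ Y i
    intro b
    rintro _ ⟨v, hv, rfl⟩
    cases b
    · -- B⁻¹(x,y) = (x, y - kx)
      show (lowerMat k)⁻¹ • v ∈ Ys false
      simp only [Set.mem_compl_iff, Xs, Set.mem_setOf_eq, not_and_or, not_le, not_lt] at hv
      have hres := keyB2 hK (vec_nonzero v) (by tauto : (v.1 1) ^ 2 ≤ (v.1 0) ^ 2 ∨ v.1 0 * v.1 1 < 0)
      simp only [Ys, Set.mem_setOf_eq, lower_inv_smul]
      simpa using hres
    · -- A⁻¹(x,y) = (x - ky, y)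
      show (upperMat k)⁻¹ • v ∈ Ys true
      simp only [Set.mem_compl_iff, Xs, Set.mem_setOf_eq, not_and_or, not_le, not_lt] at hv
      have hres := keyA2 hK (by tauto : (v.1 0) ^ 2 < (v.1 1) ^ 2 ∨ v.1 0 * v.1 1 < 0)
      simp only [Ys, Set.mem_setOf_eq, upper_inv_smul]
      simpa using hres
end
end
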